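/- Let R be a 3×3 real matrix with RᵀR = I (R orthogonal) and let t ∈ ℝ³ with ‖t‖ = 1. If s, δt ∈ ℝ³ satisfy ⟨t, δt⟩ = 0 and R[s]×[t]× + R[δt]× = 0 (as 3×3 matrices), then s = 0 and δt = 0. (This is the injectivity of the differential of the map (R,t) ↦ R[t]× from SO(3) × S² to the essential variety, showing that map is a submersion.) -/

import Mathlib

open scoped RealInnerProductSpace
open Matrix

/-- For `t = (t₁,t₂,t₃) ∈ ℝ³`, the skew-symmetric matrix `[t]×` of cross product with `t`. -/
def crossMx (t : Fin 3 → ℝ) : Matrix (Fin 3) (Fin 3) ℝ :=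
  !![0, -t 2, t 1; t 2, 0, -t 0; -t 1, t 0, 0]

/-- If `R` is a 3×3 orthogonal matrix, `t` a unit vector in `ℝ³`, and `s, δt ∈ ℝ³` satisfy
`⟨t, δt⟩ = 0` and `R[s]×[t]× + R[δt]× = 0`, then `s = 0` and `δt = 0`.  (Injectivity of the
differential of `(R,t) ↦ R[t]×`, i.e. this map is a submersion onto the essential variety.) -/
theorem essential_param_differential_injective
    (R : Matrix (Fin 3) (Fin 3) ℝ) (hR : Rᵀ * R = 1)
    (t : EuclideanSpace ℝ (Fin 3)) (ht : ‖t‖ = 1)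
    (s δt : EuclideanSpace ℝ (Fin 3)) (horth : ⟪t, δt⟫ = 0)
    (heq : R * (crossMx s * crossMx t) + R * crossMx δt = 0) :
    s = 0 ∧ δt = 0 := by
  have h2 : crossMx s * crossMx t + crossMx δt = 0 := by
    have h := congrArg (fun M => Rᵀ * M) heq
    simpa [Matrix.mul_add, ← Matrix.mul_assoc, hR] using h
  have hn : (t 0)^2 + (t 1)^2 + (t 2)^2 = 1 := by
    have := congrArg (fun x => x^2) ht
    simp only [EuclideanSpace.norm_eq] at this
    rw [Real.sq_sqrt (by positivity)] at this
    simpa [Fin.sum_univ_three, sq] using this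
  have ho : t 0 * δt 0 + t 1 * δt 1 + t 2 * δt 2 = 0 := by
    have h := horth
    simp [PiLp.inner_apply, Fin.sum_univ_three] at h
    linear_combination h
  have e : ∀ i j, (crossMx s * crossMx t + crossMx δt) i j = 0 := by
    intro i j; rw [h2]; simp
  have e00 := e 0 0; have e01 := e 0 1; have e02 := e 0 2
  have e10 := e 1 0; have e11 := e 1 1; have e12 := e 1 2
  have e20 := e 2 0; have e21 := e 2 1; have e22 := e 2 2
  simp [crossMx, Matrix.mul_apply, Fin.sum_univ_three, Matrix.cons_val_two,
    Matrix.tail_cons] at e00 e01 e02 e10 e11 e12 e20 e21 e22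
  have hsig : s 0 * t 0 + s 1 * t 1 + s 2 * t 2 = 0 := by linarith
  have hP0 : s 0 * t 0 = 0 := by linarith
  have hP1 : s 1 * t 1 = 0 := by linarith
  have hP2 : s 2 * t 2 = 0 := by linarith
  have hs0 : s 0 = 0 := by
    linear_combination (-(s 0))*hn + t 0 * hP0 + t 1 * e10 + t 2 * e20 + t 1 * e01
      + t 2 * e02 - t 0 * hP1 - t 0 * hP2
  have hs1 : s 1 = 0 := by
    linear_combination (-(s 1))*hn + t 0 * e01 + t 0 * e10 - t 1 * hP0 + t 1 * hP1
      + t 2 * e21 + t 2 * e12 - t 1 * hP2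
  have hs2 : s 2 = 0 := by
    linear_combination (-(s 2))*hn + t 0 * e20 + t 0 * e02 - t 2 * hP0 + t 1 * e21
      + t 1 * e12 - t 2 * hP1 + t 2 * hP2
  have hd0 : δt 0 = 0 := by linear_combination e21 - t 2 * hs1
  have hd1 : δt 1 = 0 := by linear_combination e02 - t 0 * hs2
  have hd2 : δt 2 = 0 := by linear_combination -e01 + t 0 * hs1
  constructor <;> ext i <;> fin_cases i <;>
    simpa using ‹_›
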